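/- Let C be a closed κ-hyperbolically convex subset of ℍⁿ_κ containing a point p̄, let f : ℍⁿ_κ → ℝ be differentiable with grad f(p̄) ≠ 0, and let α > 0. Then p̄ is a stationary point of the problem min_{p∈C} f(p) (i.e., ⟨grad f(p̄), Proj^κ_{p̄} q⟩ ≥ 0 for all q ∈ C) if and only if p̄ = P_C(exp_{p̄}(−α grad f(p̄))). -/

import Mathlib

noncomputable section

/-- Lorentzian inner product on ℝ^{n+1}. -/
def lip {n : ℕ} (x y : Fin (n+1) → ℝ) : ℝ :=
  (∑ i : Fin n, x i.castSucc * y i.castSucc) - x (Fin.last n) * y (Fin.last n)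

/-- Lorentzian norm (of vectors with nonnegative self-product). -/
def lnorm {n : ℕ} (x : Fin (n+1) → ℝ) : ℝ := Real.sqrt (lip x x)

/-- Euclidean dot product. -/
def edot {n : ℕ} (x y : Fin (n+1) → ℝ) : ℝ := ∑ i, x i * y i

/-- The matrix J = diag(1,…,1,−1) as a map. -/
def Jm {n : ℕ} (x : Fin (n+1) → ℝ) : Fin (n+1) → ℝ :=
  fun i => if i = Fin.last n then -(x i) else x i

/-- The κ-hyperbolic space form (hyperboloid model). -/
def Hyp {n : ℕ} (κ : ℝ) : Set (Fin (n+1) → ℝ) :=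
  {p | lip p p = -1/κ ∧ 0 < p (Fin.last n)}

/-- Inverse hyperbolic cosine. -/
def arcosh (x : ℝ) : ℝ := Real.log (x + Real.sqrt (x^2 - 1))

/-- Intrinsic distance on the κ-hyperbolic space form. -/
def dH {n : ℕ} (κ : ℝ) (p q : Fin (n+1) → ℝ) : ℝ :=
  (1 / Real.sqrt κ) * arcosh (-(κ * lip p q))

/-- Lorentzian projection onto the tangent space at p. -/
def projT {n : ℕ} (κ : ℝ) (p x : Fin (n+1) → ℝ) : Fin (n+1) → ℝ :=
  x + (κ * lip p x) • p

/-- Logarithm map of the κ-hyperbolic space form. -/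
def logH {n : ℕ} (κ : ℝ) (p q : Fin (n+1) → ℝ) : Fin (n+1) → ℝ :=
  (dH κ p q / lnorm (projT κ p q)) • projT κ p q

/-- Exponential map of the κ-hyperbolic space form. -/
def expH {n : ℕ} (κ : ℝ) (p v : Fin (n+1) → ℝ) : Fin (n+1) → ℝ :=
  Real.cosh (Real.sqrt κ * lnorm v) • p +
    (Real.sinh (Real.sqrt κ * lnorm v) / (Real.sqrt κ * lnorm v)) • v

/-- The cone spanned by a set. -/
def coneOf {n : ℕ} (C : Set (Fin (n+1) → ℝ)) : Set (Fin (n+1) → ℝ) :=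
  {x | ∃ t : ℝ, 0 ≤ t ∧ ∃ p ∈ C, x = t • p}

/-- The Lorentz cone. -/
def LorentzCone {n : ℕ} : Set (Fin (n+1) → ℝ) :=
  {x | lip x x ≤ 0 ∧ 0 ≤ x (Fin.last n)}

/-- The interior of the Lorentz cone. -/
def LorentzConeInt {n : ℕ} : Set (Fin (n+1) → ℝ) :=
  {x | lip x x < 0 ∧ 0 < x (Fin.last n)}

/-- Euclidean gradient of f at p. -/
def euclGrad {n : ℕ} (f : (Fin (n+1) → ℝ) → ℝ) (p : Fin (n+1) → ℝ) : Fin (n+1) → ℝ :=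
  fun i => fderiv ℝ f p (Pi.single i 1)

/-- Riemannian gradient on the κ-hyperbolic space form. -/
def gradH {n : ℕ} (κ : ℝ) (f : (Fin (n+1) → ℝ) → ℝ) (p : Fin (n+1) → ℝ) : Fin (n+1) → ℝ :=
  projT κ p (Jm (euclGrad f p))

/-- Parallel transport from T_p to T_q along the geodesic. -/
def ptrans {n : ℕ} (κ : ℝ) (p q v : Fin (n+1) → ℝ) : Fin (n+1) → ℝ :=
  v - ((κ / (κ * lip p q - 1)) * lip q v) • (p + q)

lemma lip_comm {n : ℕ} (x y : Fin (n+1) → ℝ) : lip x y = lip y x := by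
  simp [lip, mul_comm]

lemma lip_smul_left {n : ℕ} (c : ℝ) (x y : Fin (n+1) → ℝ) :
    lip (c • x) y = c * lip x y := by
  simp only [lip, Pi.smul_apply, smul_eq_mul, Finset.mul_sum, mul_sub]
  congr 1
  · exact Finset.sum_congr rfl (fun i _ => by ring)
  · ring

lemma lip_smul_right {n : ℕ} (c : ℝ) (x y : Fin (n+1) → ℝ) :
    lip x (c • y) = c * lip x y := by
  rw [lip_comm, lip_smul_left, lip_comm]

lemma lip_add_left {n : ℕ} (x y z : Fin (n+1) → ℝ) :
    lip (x + y) z = lip x z + lip y z := by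
  simp [lip, add_mul, Finset.sum_add_distrib]; ring

lemma lip_add_right {n : ℕ} (x y z : Fin (n+1) → ℝ) :
    lip x (y + z) = lip x y + lip x z := by
  rw [lip_comm, lip_add_left, lip_comm x y, lip_comm x z]

lemma lip_neg_left {n : ℕ} (x y : Fin (n+1) → ℝ) : lip (-x) y = -lip x y := by
  have := lip_smul_left (-1 : ℝ) x y
  simpa using this

lemma lip_zero_right {n : ℕ} (x : Fin (n+1) → ℝ) : lip x 0 = 0 := by
  simp [lip]

lemma lip_split {n : ℕ} (x y : Fin (n+1) → ℝ) :
    lip x y = (∑ i : Fin n, x i.castSucc * y i.castSucc) -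
      x (Fin.last n) * y (Fin.last n) := rfl

lemma spacelike {n : ℕ} {κ : ℝ} (hκ : 0 < κ) {p v : Fin (n+1) → ℝ}
    (hpp : lip p p = -1/κ) (ha : 0 < p (Fin.last n)) (hv : lip p v = 0) :
    0 ≤ lip v v ∧ (v ≠ 0 → 0 < lip v v) ∧
      v (Fin.last n)^2 ≤ κ * lip v v * p (Fin.last n)^2 := by
  set a := p (Fin.last n) with h_a
  set b := v (Fin.last n) with h_b
  set A := ∑ i : Fin n, p i.castSucc * p i.castSucc with hA
  set B := ∑ i : Fin n, v i.castSucc * v i.castSucc with hB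
  set S := ∑ i : Fin n, p i.castSucc * v i.castSucc with hS
  have hlpp : A - a * a = -1/κ := hpp
  have hlpv : S - a * b = 0 := hv
  have hlvv : lip v v = B - b * b := rfl
  have hBnn : 0 ≤ B := Finset.sum_nonneg (fun i _ => mul_self_nonneg _)
  have hAnn : 0 ≤ A := Finset.sum_nonneg (fun i _ => mul_self_nonneg _)
  have hCS : S^2 ≤ A * B := by
    have := Finset.sum_mul_sq_le_sq_mul_sq Finset.univ
      (fun i : Fin n => p i.castSucc) (fun i : Fin n => v i.castSucc)
    simpa [← hA, ← hB, ← hS, sq] using this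
  have hκA : κ * A = κ * (a*a) - 1 := by
    have : κ * (A - a*a) = κ * (-1/κ) := by rw [hlpp]
    field_simp at this ⊢; linarith
  have hSab : S = a * b := by linarith
  have hCSk : κ * (a*b)^2 ≤ (κ * (a*a) - 1) * B := by
    calc κ * (a*b)^2 = κ * S^2 := by rw [hSab]
      _ ≤ κ * (A * B) := by nlinarith [hCS, hκ.le]
      _ = (κ * A) * B := by ring
      _ = (κ * (a*a) - 1) * B := by rw [hκA]
  have hkey : B ≤ κ * (a*a) * (B - b*b) := by nlinarith [hCSk, hBnn]
  have hnn : 0 ≤ lip v v := by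
    rw [hlvv]
    nlinarith [hkey, mul_pos hκ (mul_pos ha ha), hBnn]
  refine ⟨hnn, ?_, ?_⟩
  · intro hvne
    rcases lt_or_eq_of_le hnn with h | h
    · exact h
    exfalso
    rw [hlvv] at h
    have hbb : B - b * b = 0 := h.symm
    rw [hbb, mul_zero] at hkey
    have hB0 : B = 0 := le_antisymm hkey hBnn
    have hb0 : b * b = 0 := by linarith
    have hco : ∀ i : Fin n, v i.castSucc = 0 := by
      intro i
      have h2 : v i.castSucc * v i.castSucc = 0 :=
        (Finset.sum_eq_zero_iff_of_nonneg
          (fun j (_ : j ∈ (Finset.univ : Finset (Fin n))) => mul_self_nonneg (v j.castSucc))).mp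
          hB0 i (Finset.mem_univ i)
      exact mul_self_eq_zero.mp h2
    apply hvne
    funext i
    induction i using Fin.lastCases with
    | last => exact mul_self_eq_zero.mp hb0
    | cast j => exact hco j
  · -- b^2 ≤ κ * lip v v * a^2
    rw [hlvv]
    nlinarith [hkey, hnn, hlvv, mul_pos hκ (mul_pos ha ha), hBnn, sq_nonneg b]

lemma lip_le_hyp {n : ℕ} {κ : ℝ} (hκ : 0 < κ) {p q : Fin (n+1) → ℝ}
    (hp : p ∈ Hyp κ) (hq : q ∈ Hyp κ) : lip p q ≤ -1/κ := by
  obtain ⟨hpp, ha⟩ := hp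
  obtain ⟨hqq, hc⟩ := hq
  set a := p (Fin.last n)
  set c := q (Fin.last n)
  set A := ∑ i : Fin n, p i.castSucc * p i.castSucc with hA
  set Cq := ∑ i : Fin n, q i.castSucc * q i.castSucc with hC
  set S := ∑ i : Fin n, p i.castSucc * q i.castSucc with hS
  have hlpp : A - a * a = -1/κ := hpp
  have hlqq : Cq - c * c = -1/κ := hqq
  have hgoal : lip p q = S - a * c := rfl
  have hAnn : 0 ≤ A := Finset.sum_nonneg (fun i _ => mul_self_nonneg _)
  have hCnn : 0 ≤ Cq := Finset.sum_nonneg (fun i _ => mul_self_nonneg _)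
  have hCS : S^2 ≤ A * Cq := by
    have := Finset.sum_mul_sq_le_sq_mul_sq Finset.univ
      (fun i : Fin n => p i.castSucc) (fun i : Fin n => q i.castSucc)
    simpa [← hA, ← hC, ← hS, sq] using this
  have hκA : κ * A = κ * (a*a) - 1 := by
    have : κ * (A - a*a) = κ * (-1/κ) := by rw [hlpp]
    field_simp at this ⊢; linarith
  have hκC : κ * Cq = κ * (c*c) - 1 := by
    have : κ * (Cq - c*c) = κ * (-1/κ) := by rw [hlqq]
    field_simp at this ⊢; linarith
  have hac : 1 ≤ κ * (a * c) := by
    nlinarith [mul_pos ha hc, mul_pos hκ (mul_pos ha hc)]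
  have hCS2 : (κ*S)^2 ≤ (κ*(a*a) - 1) * (κ*(c*c) - 1) := by
    calc (κ*S)^2 = κ^2 * S^2 := by ring
      _ ≤ κ^2 * (A * Cq) := by nlinarith [hCS, sq_nonneg κ]
      _ = (κ*A) * (κ*Cq) := by ring
      _ = (κ*(a*a) - 1) * (κ*(c*c) - 1) := by rw [hκA, hκC]
  have hmain : κ * S ≤ κ * (a*c) - 1 := by
    nlinarith [hCS2, hac, sq_nonneg (a - c), hκ, mul_pos hκ (mul_pos ha hc)]
  rw [hgoal]
  have hrw : (-1/κ : ℝ) = -(1/κ) := by ring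
  rw [hrw]
  have h1κ : κ * (1/κ) = 1 := by field_simp
  nlinarith [hmain, h1κ, hκ]

lemma arcosh_cosh {t : ℝ} (ht : 0 ≤ t) : arcosh (Real.cosh t) = t := by
  unfold arcosh
  have h1 : Real.cosh t ^ 2 - 1 = Real.sinh t ^ 2 := by
    have := Real.cosh_sq t; linarith
  rw [h1, Real.sqrt_sq (Real.sinh_nonneg_iff.mpr ht), Real.cosh_add_sinh, Real.log_exp]

lemma arcosh_pos {x : ℝ} (hx : 1 < x) : 0 < arcosh x := by
  unfold arcosh
  apply Real.log_pos
  nlinarith [Real.sqrt_nonneg (x^2 - 1)]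

lemma arcosh_nonneg {x : ℝ} (hx : 1 ≤ x) : 0 ≤ arcosh x := by
  unfold arcosh
  apply Real.log_nonneg
  nlinarith [Real.sqrt_nonneg (x^2 - 1)]

lemma lip_projT_left {n : ℕ} {κ : ℝ} (hκ : κ ≠ 0) {p : Fin (n+1) → ℝ}
    (hpp : lip p p = -1/κ) (x : Fin (n+1) → ℝ) : lip p (projT κ p x) = 0 := by
  unfold projT
  rw [lip_add_right, lip_smul_right, hpp]
  field_simp
  ring

lemma lip_projT_projT {n : ℕ} {κ : ℝ} (hκ : κ ≠ 0) {p : Fin (n+1) → ℝ}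
    (hpp : lip p p = -1/κ) (a b : Fin (n+1) → ℝ) :
    lip (projT κ p a) (projT κ p b) = lip a b + κ * lip p a * lip p b := by
  unfold projT
  rw [lip_add_left, lip_add_right, lip_add_right, lip_smul_left, lip_smul_right,
    lip_smul_right, lip_smul_left, hpp]
  have h1 : lip a p = lip p a := lip_comm a p
  have h2 : lip b p = lip p b := by rw [lip_comm]
  rw [h1]
  field_simp
  ring

lemma projT_eq_zero_imp {n : ℕ} {κ : ℝ} (hκ : 0 < κ) {p q : Fin (n+1) → ℝ}
    (hp : p ∈ Hyp κ) (hq : q ∈ Hyp κ) (h : projT κ p q = 0) : p = q := by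
  have hqc : q = (-(κ * lip p q)) • p := by
    have := h
    unfold projT at this
    have h2 : q = -((κ * lip p q) • p) := by
      have h3 := congrArg (fun w => w - (κ * lip p q) • p) this
      simpa [add_sub_cancel_right] using h3
    exact h2.trans (neg_smul _ _).symm
  set c := -(κ * lip p q) with hc
  have hqq : lip q q = c^2 * lip p p := by
    nth_rewrite 1 [hqc]
    nth_rewrite 1 [hqc]
    rw [lip_smul_left, lip_smul_right]; ring
  have hc2 : c^2 = 1 := by
    rw [hp.1, hq.1] at hqq
    have hκ' : κ ≠ 0 := hκ.ne'
    field_simp at hqq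
    nlinarith [hqq]
  have hlast : q (Fin.last n) = c * p (Fin.last n) := by rw [hqc]; simp
  have hcpos : 0 < c := by
    by_contra hneg
    push_neg at hneg
    have := hq.2
    rw [hlast] at this
    nlinarith [hp.2]
  have hc1 : c = 1 := by nlinarith
  rw [hqc, hc1]
  ext i; simp

set_option maxHeartbeats 1600000 in
lemma exp_facts {n : ℕ} {κ α : ℝ} (hκ : 0 < κ) (hα : 0 < α) {p g : Fin (n+1) → ℝ}
    (hp : p ∈ Hyp κ) (htan : lip p g = 0) (hG : 0 < lip g g) :
    expH κ p (-(α•g)) ∈ Hyp κ ∧ logH κ p (expH κ p (-(α•g))) = (-α) • g ∧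
      ∃ c : ℝ, 0 < c ∧ projT κ p (expH κ p (-(α•g))) = (-c) • g := by
  set G := lip g g with hGdef
  have hsG : 0 < Real.sqrt G := Real.sqrt_pos.mpr hG
  have hsκ : 0 < Real.sqrt κ := Real.sqrt_pos.mpr hκ
  have hneg : -(α•g) = (-α) • g := (neg_smul α g).symm
  have hvv : lip (-(α•g)) (-(α•g)) = α^2 * G := by
    rw [hneg, lip_smul_left, lip_smul_right]; ring
  have hlnv : lnorm (-(α•g)) = α * Real.sqrt G := by
    unfold lnorm
    rw [hvv, show α^2 * G = (α * Real.sqrt G)^2 by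
      rw [mul_pow, Real.sq_sqrt hG.le],
      Real.sqrt_sq (by positivity)]
  set t := Real.sqrt κ * (α * Real.sqrt G) with htdef
  have htpos : 0 < t := by positivity
  set ct := Real.cosh t with hctdef
  set st := Real.sinh t with hstdef
  have hstpos : 0 < st := by rw [hstdef]; exact (Real.sinh_pos_iff).mpr htpos
  have hctpos : 0 < ct := by rw [hctdef]; exact Real.cosh_pos t
  set c := st / (Real.sqrt κ * Real.sqrt G) with hcdef
  have hcpos : 0 < c := by positivity
  have hκG : (Real.sqrt κ * Real.sqrt G)^2 = κ * G := by
    rw [mul_pow, Real.sq_sqrt hκ.le, Real.sq_sqrt hG.le]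
  clear_value G t ct st c
  set q' := expH κ p (-(α•g)) with hq'def
  have hq' : q' = ct • p + (-c) • g := by
    rw [hq'def]
    unfold expH
    rw [hlnv, ← htdef, hneg, smul_smul, ← hctdef]
    congr 2
    rw [hcdef, hstdef]
    field_simp
    rw [htdef]
    ring
  clear_value q'
  have hlpq : lip p q' = ct * (-1/κ) := by
    rw [hq', lip_add_right, lip_smul_right, lip_smul_right, hp.1, htan]; ring
  have hgp : lip g p = 0 := by rw [lip_comm]; exact htan
  have hc2G : c^2 * G = st^2 / κ := by
    rw [hcdef, div_pow, hκG]
    field_simp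
  have hcosh2 : ct^2 = st^2 + 1 := by rw [hctdef, hstdef]; exact Real.cosh_sq t
  have hq'q' : lip q' q' = -1/κ := by
    rw [hq']
    simp only [lip_add_left, lip_add_right, lip_smul_left, lip_smul_right]
    rw [hp.1, htan, hgp, ← hGdef]
    have h6 : c^2 * G * κ = st^2 := by
      have h7 := hc2G
      field_simp at h7
      linarith
    field_simp
    nlinarith [hcosh2, h6]
  have hlast : 0 < q' (Fin.last n) := by
    have hsp := spacelike hκ hp.1 hp.2 htan
    have hb2 : g (Fin.last n)^2 ≤ κ * G * p (Fin.last n)^2 := by rw [hGdef]; exact hsp.2.2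
    have h5 : Real.sqrt (κ * G * p (Fin.last n)^2) =
        Real.sqrt κ * Real.sqrt G * p (Fin.last n) := by
      rw [show κ * G * p (Fin.last n)^2 = (Real.sqrt κ * Real.sqrt G * p (Fin.last n))^2 by
        rw [mul_pow, hκG]]
      exact Real.sqrt_sq (mul_nonneg (mul_nonneg hsκ.le hsG.le) hp.2.le)
    have h1 : g (Fin.last n) ≤ Real.sqrt κ * Real.sqrt G * p (Fin.last n) := by
      calc g (Fin.last n) ≤ |g (Fin.last n)| := le_abs_self _
        _ = Real.sqrt (g (Fin.last n)^2) := (Real.sqrt_sq_eq_abs _).symm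
        _ ≤ Real.sqrt (κ * G * p (Fin.last n)^2) := Real.sqrt_le_sqrt hb2
        _ = Real.sqrt κ * Real.sqrt G * p (Fin.last n) := h5
    have hcg : c * g (Fin.last n) ≤ st * p (Fin.last n) := by
      calc c * g (Fin.last n) ≤ c * (Real.sqrt κ * Real.sqrt G * p (Fin.last n)) :=
            mul_le_mul_of_nonneg_left h1 hcpos.le
        _ = st * p (Fin.last n) := by rw [hcdef]; field_simp
    have hval : q' (Fin.last n) = ct * p (Fin.last n) - c * g (Fin.last n) := by
      rw [hq']; simp; ring
    rw [hval]
    have hexp : ct - st = Real.exp (-t) := by rw [hctdef, hstdef]; exact Real.cosh_sub_sinh t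
    have h8 : 0 < (ct - st) * p (Fin.last n) :=
      mul_pos (by rw [hexp]; exact Real.exp_pos _) hp.2
    nlinarith [h8, hcg]
  have hmem : q' ∈ Hyp κ := ⟨hq'q', hlast⟩
  have hproj : projT κ p q' = (-c) • g := by
    unfold projT
    rw [hlpq, hq']
    have hsc : κ * (ct * (-1/κ)) = -ct := by field_simp
    rw [hsc]
    ext i
    simp only [Pi.add_apply, Pi.smul_apply, smul_eq_mul, Pi.neg_apply, neg_smul]
    ring
  have hlnproj : lnorm (projT κ p q') = c * Real.sqrt G := by
    unfold lnorm
    rw [hproj, lip_smul_left, lip_smul_right, ← hGdef,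
      show (-c) * ((-c) * G) = (c * Real.sqrt G)^2 by
        rw [mul_pow, Real.sq_sqrt hG.le]; ring]
    exact Real.sqrt_sq (by positivity)
  have hdH : dH κ p q' = α * Real.sqrt G := by
    unfold dH
    rw [hlpq, show -(κ * (ct * (-1/κ))) = ct by field_simp, hctdef,
      arcosh_cosh htpos.le, htdef]
    field_simp
  have hlog : logH κ p q' = (-α) • g := by
    unfold logH
    rw [hdH, hlnproj, hproj, smul_smul]
    congr 1
    field_simp
  exact ⟨hmem, hlog, c, hcpos, hproj⟩

lemma projT_self {n : ℕ} {κ : ℝ} (hκ : κ ≠ 0) {p : Fin (n+1) → ℝ}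
    (hpp : lip p p = -1/κ) : projT κ p p = 0 := by
  unfold projT
  rw [hpp]
  have : κ * (-1/κ) = -1 := by field_simp
  rw [this]
  ext i; simp

lemma logH_facts {n : ℕ} {κ : ℝ} (hκ : 0 < κ) {x y : Fin (n+1) → ℝ}
    (hx : x ∈ Hyp κ) (hy : y ∈ Hyp κ) (hne : x ≠ y) :
    ∃ s : ℝ, 0 < s ∧ logH κ x y = s • projT κ x y ∧ 1 < -(κ * lip x y) := by
  have hpne : projT κ x y ≠ 0 := fun h => hne (projT_eq_zero_imp hκ hx hy h)
  have htan : lip x (projT κ x y) = 0 := lip_projT_left hκ.ne' hx.1 y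
  have hpos : 0 < lip (projT κ x y) (projT κ x y) :=
    (spacelike hκ hx.1 hx.2 htan).2.1 hpne
  have hform : lip (projT κ x y) (projT κ x y) = lip y y + κ * lip x y * lip x y :=
    lip_projT_projT hκ.ne' hx.1 y y
  have h1κ : κ * (1/κ) = 1 := by field_simp
  have hsq : 1 < (κ * lip x y)^2 := by
    rw [hy.1] at hform
    have h2 : (0:ℝ) < -1/κ + κ * lip x y * lip x y := by
      rw [← hform]; exact hpos
    have h3 : κ * (-1/κ) = -1 := by field_simp
    nlinarith [mul_pos hκ h2, h3]
  have hle : lip x y ≤ -1/κ := lip_le_hyp hκ hx hy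
  have hX : κ * lip x y ≤ -1 := by
    have h3 : κ * (-1/κ) = -1 := by field_simp
    have h4 := mul_le_mul_of_nonneg_left hle hκ.le
    linarith [h4, h3]
  have hstrict : 1 < -(κ * lip x y) := by nlinarith [hsq, hX]
  have hd : 0 < dH κ x y := by
    unfold dH
    have hsκ : 0 < Real.sqrt κ := Real.sqrt_pos.mpr hκ
    exact mul_pos (by positivity) (arcosh_pos hstrict)
  have hl : 0 < lnorm (projT κ x y) := Real.sqrt_pos.mpr hpos
  exact ⟨dH κ x y / lnorm (projT κ x y), div_pos hd hl, rfl, hstrict⟩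

set_option maxHeartbeats 1600000 in
/-- Characterization of stationary points via the projection: for p̄ ∈ C with
grad f(p̄) ≠ 0 and α > 0, p̄ is stationary for min_{p∈C} f (i.e.
⟨grad f(p̄), Proj^κ_{p̄} q⟩ ≥ 0 for all q ∈ C) iff p̄ = P_C(exp_{p̄}(−α grad f(p̄))),
where z denotes the intrinsic projection P_C(exp_{p̄}(−α grad f(p̄))). -/
theorem stationary_iff_fixed_point_of_projection {n : ℕ} (κ : ℝ) (hκ : 0 < κ)
    (C : Set (Fin (n+1) → ℝ)) (hC : C ⊆ Hyp κ) (hCc : IsClosed C)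
    (hconv : Convex ℝ (coneOf C))
    (f : (Fin (n+1) → ℝ) → ℝ) (hf : Differentiable ℝ f)
    (pbar : Fin (n+1) → ℝ) (hpbar : pbar ∈ C)
    (hg : gradH κ f pbar ≠ 0)
    (α : ℝ) (hα : 0 < α)
    (z : Fin (n+1) → ℝ) (hzmem : z ∈ C)
    (hzmin : ∀ y ∈ C, dH κ (expH κ pbar (-(α • gradH κ f pbar))) z ≤
      dH κ (expH κ pbar (-(α • gradH κ f pbar))) y)
    (hzvar : ∀ y ∈ C,
      lip (logH κ z (expH κ pbar (-(α • gradH κ f pbar)))) (logH κ z y) ≤ 0) :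
    (∀ q ∈ C, 0 ≤ lip (gradH κ f pbar) (projT κ pbar q)) ↔ pbar = z := by
  have hpH : pbar ∈ Hyp κ := hC hpbar
  have hzH : z ∈ Hyp κ := hC hzmem
  have htan : lip pbar (gradH κ f pbar) = 0 := by
    unfold gradH
    exact lip_projT_left hκ.ne' hpH.1 _
  set g := gradH κ f pbar with hgdef
  clear_value g
  have hG : 0 < lip g g := (spacelike hκ hpH.1 hpH.2 htan).2.1 hg
  obtain ⟨hq'mem, hlog, c, hc, hproj⟩ := exp_facts hκ hα hpH htan hG
  set q' := expH κ pbar (-(α • g)) with hq'def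
  clear_value q'
  constructor
  · -- stationary → pbar = z
    intro hstat
    by_contra hne
    by_cases hzq : z = q'
    · have h0 := hstat z hzmem
      rw [hzq, hproj, lip_smul_right] at h0
      nlinarith [h0, hc, hG]
    · -- nondegenerate triangle
      have hA0 : 0 ≤ lip g (projT κ pbar z) := hstat z hzmem
      have hA1 : lip (projT κ pbar q') (projT κ pbar z) ≤ 0 := by
        rw [hproj, lip_smul_left]
        nlinarith [hA0, hc]
      have hA2 : lip (projT κ pbar q') (projT κ pbar z) =
          lip q' z + κ * lip pbar q' * lip pbar z :=
        lip_projT_projT hκ.ne' hpH.1 q' z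
      -- B from hzvar
      obtain ⟨s3, hs3, hlog3, hw⟩ := logH_facts hκ hzH hq'mem hzq
      obtain ⟨s4, hs4, hlog4, hu⟩ := logH_facts hκ hzH hpH (fun h => hne h.symm)
      have hB0 := hzvar pbar hpbar
      rw [hlog3, hlog4, lip_smul_left, lip_smul_right] at hB0
      have hB1 : lip (projT κ z q') (projT κ z pbar) ≤ 0 := by
        have hs34 : 0 < s3 * s4 := mul_pos hs3 hs4
        nlinarith [hB0, hs34]
      have hB2 : lip (projT κ z q') (projT κ z pbar) =
          lip q' pbar + κ * lip z q' * lip z pbar :=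
        lip_projT_projT hκ.ne' hzH.1 q' pbar
      -- abbreviations
      set P := lip pbar z with hP
      set Q := lip pbar q' with hQ
      set R := lip z q' with hR
      have hcz : lip q' z = R := by rw [hR, lip_comm]
      have hcp : lip q' pbar = Q := by rw [hQ, lip_comm]
      have hczp : lip z pbar = P := by rw [hP, lip_comm]
      rw [hA2, hcz] at hA1
      rw [hB2, hcp, hczp] at hB1
      -- hu : 1 < -(κ * lip z pbar) = -(κ * P)
      rw [hczp] at hu
      have hv : -(κ * Q) ≥ 1 := by
        have hle := lip_le_hyp hκ hpH hq'mem
        have h3 : κ * (-1/κ) = -1 := by field_simp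
        have h4 := mul_le_mul_of_nonneg_left hle hκ.le
        rw [← hQ] at h4
        linarith [h4, h3]
      -- derive uv ≤ w, uw ≤ v and contradiction
      have huv : (-(κ * P)) * (-(κ * Q)) ≤ -(κ * R) := by nlinarith [hA1, hκ]
      have huw : (-(κ * P)) * (-(κ * R)) ≤ -(κ * Q) := by nlinarith [hB1, hκ]
      have hupos : 0 < -(κ * P) := by linarith
      have h5 := mul_le_mul_of_nonneg_left huv hupos.le
      nlinarith [h5, huw, hu, hv]
  · -- pbar = z → stationary
    intro hpz q hq
    by_cases hqp : pbar = q
    · rw [← hqp, projT_self hκ.ne' hpH.1, lip_zero_right]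
    · obtain ⟨s, hs, hlogeq, _⟩ := logH_facts hκ hpH (hC hq) hqp
      have h := hzvar q hq
      rw [← hpz] at h
      rw [hlog, hlogeq, lip_smul_left, lip_smul_right] at h
      nlinarith [h, mul_pos hα hs]
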